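/- Assuming Schanuel's conjecture: if B = (β_1, …, β_n) is a reduced tower, then for every i exactly one of β_i and e^{β_i} is algebraic over B_{i-1}, and the transcendence degree of B_i over Q is exactly i. -/

import Mathlib

open Complex Polynomial


section Infra

/-- An element of a subfield is algebraic over it. -/
lemma isAlg_of_mem {F : Subfield ℂ} {a : ℂ} (h : a ∈ F) : IsAlgebraic F a := by
  exact isAlgebraic_algebraMap (R := F) (A := ℂ) ⟨a, h⟩

lemma isAlg_mono {E F : Subfield ℂ} (h : E ≤ F) {a : ℂ} (ha : IsAlgebraic E a) :
    IsAlgebraic F a := by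
  refine ha.ringHom_of_comp_eq (Subfield.inclusion h) (RingHom.id ℂ)
    (fun x y hxy => Subtype.ext (congrArg (Subtype.val : F → ℂ) hxy : ((x:ℂ) = (y:ℂ)))) ?_
  ext x
  rfl

lemma isAlg_add {F : Subfield ℂ} {x y : ℂ} (hx : IsAlgebraic F x) (hy : IsAlgebraic F y) :
    IsAlgebraic F (x + y) :=
  (isAlgebraic_iff_isIntegral.mpr
    ((isAlgebraic_iff_isIntegral.mp hx).add (isAlgebraic_iff_isIntegral.mp hy)))

lemma isAlg_mul {F : Subfield ℂ} {x y : ℂ} (hx : IsAlgebraic F x) (hy : IsAlgebraic F y) :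
    IsAlgebraic F (x * y) :=
  (isAlgebraic_iff_isIntegral.mpr
    ((isAlgebraic_iff_isIntegral.mp hx).mul (isAlgebraic_iff_isIntegral.mp hy)))

lemma isAlg_neg {F : Subfield ℂ} {x : ℂ} (hx : IsAlgebraic F x) : IsAlgebraic F (-x) :=
  (isAlgebraic_iff_isIntegral.mpr ((isAlgebraic_iff_isIntegral.mp hx).neg))

lemma isAlg_inv {F : Subfield ℂ} {x : ℂ} (hx : IsAlgebraic F x) : IsAlgebraic F x⁻¹ :=
  IsAlgebraic.inv_iff.mpr hx

/-- Transitivity: if everything in `F` is algebraic over `E ≤ F`, then anything algebraic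
over `F` is algebraic over `E`. -/
lemma isAlg_trans {E F : Subfield ℂ} (hle : E ≤ F) (halg : ∀ x ∈ F, IsAlgebraic E x)
    {a : ℂ} (ha : IsAlgebraic F a) : IsAlgebraic E a := by
  letI : Algebra E F := (Subfield.inclusion hle).toAlgebra
  haveI : IsScalarTower E F ℂ := IsScalarTower.of_algebraMap_eq fun x => rfl
  haveI : Algebra.IsIntegral E F := ⟨fun x => by
    have h1 : IsIntegral E (x : ℂ) := isAlgebraic_iff_isIntegral.mp (halg x x.2)
    exact IsIntegral.tower_bot (B := ℂ) (fun u v huv => Subtype.ext (huv : (u:ℂ) = v)) h1⟩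
  exact (isIntegral_trans (A := F) a (isAlgebraic_iff_isIntegral.mp ha)).isAlgebraic

end Infra

section Bridge

variable (K : Type*) [Field K] [Algebra K ℂ]

lemma adjoin_subset_closure (T : Set ℂ) {x : ℂ} (hx : x ∈ Algebra.adjoin K T) :
    x ∈ Subfield.closure (Set.range (algebraMap K ℂ) ∪ T) := by
  induction hx using Algebra.adjoin_induction with
  | mem x hx => exact Subfield.subset_closure (Or.inr hx)
  | algebraMap r => exact Subfield.subset_closure (Or.inl ⟨r, rfl⟩)
  | add x y hx hy ihx ihy => exact add_mem ihx ihy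
  | mul x y hx hy ihx ihy => exact mul_mem ihx ihy

/-- The inclusion of the ring adjoin into the subfield closure, as a ring hom. -/
noncomputable def adjoinToClosure (T : Set ℂ) :
    Algebra.adjoin K T →+* Subfield.closure (Set.range (algebraMap K ℂ) ∪ T) where
  toFun := fun x => ⟨x.1, adjoin_subset_closure K T x.2⟩
  map_one' := rfl
  map_mul' := fun _ _ => rfl
  map_zero' := rfl
  map_add' := fun _ _ => rfl

/-- Easy direction: algebraic over the ring adjoin implies algebraic over the field closure. -/
lemma isAlg_adjoin_to_closure {T : Set ℂ} {a : ℂ}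
    (h : IsAlgebraic (Algebra.adjoin K T) a) :
    IsAlgebraic (Subfield.closure (Set.range (algebraMap K ℂ) ∪ T)) a := by
  refine h.ringHom_of_comp_eq (adjoinToClosure K T) (RingHom.id ℂ)
    (fun x y hxy => Subtype.ext
      (congrArg (Subtype.val : Subfield.closure (Set.range (algebraMap K ℂ) ∪ T) → ℂ) hxy
        : ((x:ℂ) = (y:ℂ)))) ?_
  ext x
  rfl

/-- Hard direction: algebraic over the field closure implies algebraic over the ring adjoin. -/
lemma isAlg_closure_to_adjoin {T : Set ℂ} {a : ℂ}
    (h : IsAlgebraic (Subfield.closure (Set.range (algebraMap K ℂ) ∪ T)) a) :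
    IsAlgebraic (Algebra.adjoin K T) a := by
  set A := Algebra.adjoin K T with hA
  set L := Subfield.closure (Set.range (algebraMap K ℂ) ∪ T) with hL
  have hsubring : Subring.closure (Set.range (algebraMap K ℂ) ∪ T) ≤ A.toSubring := by
    refine Subring.closure_le.mpr ?_
    rintro x (⟨r, rfl⟩ | hx)
    · exact A.algebraMap_mem r
    · exact Algebra.subset_adjoin hx
  letI : Algebra A L := (adjoinToClosure K T).toAlgebra
  haveI : IsScalarTower A L ℂ := IsScalarTower.of_algebraMap_eq fun x => rfl
  haveI : IsFractionRing A L := by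
    constructor
    constructor
    · rintro ⟨y, hy⟩
      refine isUnit_iff_ne_zero.mpr ?_
      intro h0
      have hy0 : y = 0 := by
        apply Subtype.ext
        have := congrArg (Subtype.val : L → ℂ) h0
        exact this
      exact nonZeroDivisors.ne_zero hy hy0
    · rintro ⟨z, hz⟩
      obtain ⟨y, hy, d, hd, hyd⟩ := Subfield.mem_closure_iff.mp hz
      by_cases hd0 : d = 0
      · refine ⟨⟨0, 1⟩, ?_⟩
        apply Subtype.ext
        show z * (1 : ℂ) = (0 : ℂ)
        rw [mul_one]
        rw [hd0, div_zero] at hyd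
        exact hyd.symm
      · refine ⟨⟨⟨y, hsubring hy⟩, ⟨⟨d, hsubring hd⟩,
          mem_nonZeroDivisors_of_ne_zero (fun h0 => hd0 (congrArg Subtype.val h0))⟩⟩, ?_⟩
        apply Subtype.ext
        show z * d = y
        field_simp at hyd ⊢
        linear_combination -hyd
    · intro x y hxy
      refine ⟨1, ?_⟩
      have : x = y := Subtype.ext (congrArg (Subtype.val : L → ℂ) hxy)
      rw [this]
  exact (IsFractionRing.isAlgebraic_iff A L ℂ).mpr h

end Bridge

section ClosureSets

lemma range_algebraMap_subfield (F : Subfield ℂ) :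
    Set.range (algebraMap F ℂ) = (F : Set ℂ) := Subtype.range_coe

lemma closure_insert_eq (S : Set ℂ) (b : ℂ) :
    Subfield.closure (insert b S) =
      Subfield.closure (Set.range (algebraMap (Subfield.closure S) ℂ) ∪ {b}) := by
  rw [range_algebraMap_subfield, Set.insert_eq, Subfield.closure_union, Subfield.closure_union,
    Subfield.closure_eq, sup_comm]

lemma closure_rat_union (T : Set ℂ) :
    Subfield.closure (Set.range (algebraMap ℚ ℂ) ∪ T) = Subfield.closure T := by
  refine le_antisymm (Subfield.closure_le.mpr (Set.union_subset ?_ Subfield.subset_closure))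
    (Subfield.closure_mono Set.subset_union_right)
  rintro _ ⟨q, rfl⟩
  rw [eq_ratCast (algebraMap ℚ ℂ) q]
  exact SubfieldClass.ratCast_mem _ q

end ClosureSets

section Cl

/-- `cl S` is the set of complex numbers algebraic over the subfield generated by `S`. -/
def cl (S : Set ℂ) : Set ℂ := {a | IsAlgebraic (Subfield.closure S) a}

lemma subfield_mem_cl {S : Set ℂ} {a : ℂ} (h : a ∈ Subfield.closure S) : a ∈ cl S :=
  isAlg_of_mem h

lemma subset_cl {S : Set ℂ} : S ⊆ cl S := fun _ ha => subfield_mem_cl (Subfield.subset_closure ha)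

lemma cl_le_cl {T U : Set ℂ} (h : T ⊆ cl U) : cl T ⊆ cl U := by
  intro a ha
  have h1 : Subfield.closure T ≤ Subfield.closure (U ∪ T) :=
    Subfield.closure_mono Set.subset_union_right
  have h2 : Subfield.closure U ≤ Subfield.closure (U ∪ T) :=
    Subfield.closure_mono Set.subset_union_left
  refine isAlg_trans h2 ?_ (isAlg_mono h1 ha)
  intro x hx
  induction hx using Subfield.closure_induction with
  | mem x hx =>
    rcases hx with hU | hT
    · exact subfield_mem_cl (Subfield.subset_closure hU)
    · exact h hT
  | one => exact isAlg_of_mem (one_mem _)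
  | add x y hx hy ihx ihy => exact isAlg_add ihx ihy
  | neg x hx ihx => exact isAlg_neg ihx
  | inv x hx ihx => exact isAlg_inv ihx
  | mul x y hx hy ihx ihy => exact isAlg_mul ihx ihy

lemma cl_mono {S T : Set ℂ} (h : S ⊆ T) : cl S ⊆ cl T :=
  cl_le_cl fun x hx => subset_cl (h hx)

/-- The exchange property for algebraic closure. -/
lemma cl_exchange {S : Set ℂ} {a b : ℂ} (hab : a ∈ cl (insert b S)) (ha : a ∉ cl S) :
    b ∈ cl (insert a S) := by
  by_contra hb
  set F := Subfield.closure S with hF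
  -- `a` is algebraic over the ring adjoin of `{b}` over `F`
  have hab' : IsAlgebraic (Algebra.adjoin F ({b} : Set ℂ)) a := by
    apply isAlg_closure_to_adjoin
    rw [← closure_insert_eq]
    exact hab
  -- `b` is transcendental over the ring adjoin of `{a}` over `F`
  have htb : Transcendental (Algebra.adjoin F ({a} : Set ℂ)) b := by
    intro hc
    apply hb
    have := isAlg_adjoin_to_closure F hc
    rwa [← closure_insert_eq] at this
  -- single family `a` is algebraically independent over `F`
  have hxa : AlgebraicIndependent F (fun _ : Unit => a) :=
    algebraicIndependent_unique_type_iff.mpr ha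
  -- extend with `b`
  have hpair : AlgebraicIndependent F (fun o : Option Unit => o.elim b (fun _ : Unit => a)) := by
    refine (hxa.option_iff_transcendental b).mpr ?_
    rwa [Set.range_const]
  -- swap the pair
  have hswap : AlgebraicIndependent F (fun o : Option Unit => o.elim a (fun _ : Unit => b)) := by
    have h1 := hpair.comp (Equiv.swap (none : Option Unit) (some ()))
      (Equiv.injective _)
    convert h1 using 1
    funext o
    cases o with
    | none => simp
    | some u => cases u; simp
  have hxb : AlgebraicIndependent F (fun _ : Unit => b) := by
    have h2 := hswap.comp (fun u : Unit => (some u : Option Unit))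
      (fun x y _ => rfl)
    exact h2
  have hta : Transcendental (Algebra.adjoin F (Set.range (fun _ : Unit => b))) a :=
    (hxb.option_iff_transcendental a).mp hswap
  rw [Set.range_const] at hta
  exact hta hab'

/-- Bridge over ℚ: membership in `cl` implies algebraicity over the ring adjoin over ℚ. -/
lemma cl_to_adjoin_rat {T : Set ℂ} {a : ℂ} (h : a ∈ cl T) :
    IsAlgebraic (Algebra.adjoin ℚ T) a := by
  apply isAlg_closure_to_adjoin
  rwa [closure_rat_union]

end Cl

section Counting

/-- An element of an algebraically independent finset is not in the closure of the rest. -/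
lemma indep_not_mem_cl_erase {t : Finset ℂ}
    (ht : AlgebraicIndependent ℚ ((↑) : ((t : Set ℂ)) → ℂ)) {a : ℂ} (hat : a ∈ t) :
    a ∉ cl ↑(t.erase a) := by
  intro hmem
  have hA : IsAlgebraic (Algebra.adjoin ℚ (↑(t.erase a) : Set ℂ)) a := cl_to_adjoin_rat hmem
  have hsub : (↑(t.erase a) : Set ℂ) ⊆ (t : Set ℂ) := by
    intro x hx
    exact Finset.mem_coe.mpr (Finset.mem_of_mem_erase (Finset.mem_coe.mp hx))
  have hx : AlgebraicIndependent ℚ ((↑) : (↑(t.erase a) : Set ℂ) → ℂ) := ht.mono hsub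
  have hopt : AlgebraicIndependent ℚ
      (fun o : Option (↑(t.erase a) : Set ℂ) => o.elim a ((↑) : (↑(t.erase a) : Set ℂ) → ℂ)) := by
    have hg : Function.Injective
        (fun o : Option (↑(t.erase a) : Set ℂ) =>
          (o.elim ⟨a, hat⟩ (Set.inclusion hsub) : (t : Set ℂ))) := by
      rintro (_ | x) (_ | y) hxy
      · rfl
      · exfalso
        have h2 : a = y.1 := congrArg (Subtype.val : ((t : Set ℂ)) → ℂ) hxy
        have hy := Finset.mem_coe.mp y.2
        rw [Finset.mem_erase] at hy
        exact hy.1 h2.symm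
      · exfalso
        have h2 : x.1 = a := congrArg (Subtype.val : ((t : Set ℂ)) → ℂ) hxy
        have hx' := Finset.mem_coe.mp x.2
        rw [Finset.mem_erase] at hx'
        exact hx'.1 h2
      · have h2 : x.1 = y.1 := congrArg (Subtype.val : ((t : Set ℂ)) → ℂ) hxy
        exact congrArg some (Subtype.ext h2)
    have h1 := ht.comp _ hg
    convert h1 using 1
    funext o
    cases o <;> rfl
  have := (hx.option_iff_transcendental a).mp hopt
  rw [Subtype.range_coe] at this
  exact this hA

lemma count_aux (N : ℕ) : ∀ s t' t : Finset ℂ, s.card ≤ N →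
    AlgebraicIndependent ℚ ((↑) : ((t : Set ℂ)) → ℂ) → t' ⊆ t →
    (↑t : Set ℂ) ⊆ cl (↑s ∪ ↑t') → t.card ≤ s.card + t'.card := by
  induction N with
  | zero =>
    intro s t' t hsN ht ht't hcov
    have hs0 : s = ∅ := Finset.card_eq_zero.mp (Nat.le_zero.mp hsN)
    subst hs0
    have : t ⊆ t' := by
      intro x hx
      by_contra hxt'
      have h1 : x ∈ cl ↑t' := by
        have := hcov (Finset.mem_coe.mpr hx)
        simpa using this
      have h2 : (↑t' : Set ℂ) ⊆ ↑(t.erase x) := by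
        intro y hy
        refine Finset.mem_coe.mpr (Finset.mem_erase.mpr ⟨?_, ht't (Finset.mem_coe.mp hy)⟩)
        rintro rfl
        exact hxt' (Finset.mem_coe.mp hy)
      exact indep_not_mem_cl_erase ht hx (cl_mono h2 h1)
    simpa using Finset.card_le_card this
  | succ N ih =>
    intro s t' t hsN ht ht't hcov
    by_cases hall : ∀ x ∈ t, x ∈ s ∨ x ∈ t'
    · have : t ⊆ s ∪ t' := fun x hx => Finset.mem_union.mpr (hall x hx)
      calc t.card ≤ (s ∪ t').card := Finset.card_le_card this
        _ ≤ s.card + t'.card := Finset.card_union_le _ _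
    · push_neg at hall
      obtain ⟨a, hat, hans, hant'⟩ := hall
      -- a is not in cl t'
      have hanotcl : a ∉ cl ↑t' := by
        intro h1
        have h2 : (↑t' : Set ℂ) ⊆ ↑(t.erase a) := by
          intro y hy
          refine Finset.mem_coe.mpr (Finset.mem_erase.mpr ⟨?_, ht't (Finset.mem_coe.mp hy)⟩)
          rintro rfl
          exact hant' (Finset.mem_coe.mp hy)
        exact indep_not_mem_cl_erase ht hat (cl_mono h2 h1)
      -- minimal cardinality of u ⊆ s with a ∈ cl (u ∪ t')
      have hP : ∃ k, ∃ u : Finset ℂ, u ⊆ s ∧ u.card ≤ k ∧ a ∈ cl (↑u ∪ ↑t') :=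
        ⟨s.card, s, le_refl _, le_refl _, hcov (Finset.mem_coe.mpr hat)⟩
      classical
      set k₀ := Nat.find hP with hk₀
      obtain ⟨u, hus, hucard, hau⟩ := Nat.find_spec hP
      have hk₀pos : 0 < k₀ := by
        rcases Nat.eq_zero_or_pos k₀ with h0 | h0
        · exfalso
          obtain ⟨u', hu's, hu'card, hau'⟩ := Nat.find_spec hP
          rw [← hk₀, h0, Nat.le_zero, Finset.card_eq_zero] at hu'card
          subst hu'card
          simp only [Finset.coe_empty, Set.empty_union] at hau'
          exact hanotcl hau'
        · exact h0
      have hune : u.Nonempty := by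
        rcases Finset.eq_empty_or_nonempty u with rfl | hne
        · exfalso
          simp only [Finset.coe_empty, Set.empty_union] at hau
          exact hanotcl hau
        · exact hne
      obtain ⟨b, hbu⟩ := hune
      have hbs : b ∈ s := hus hbu
      -- minimality: a ∉ cl ((u.erase b) ∪ t')
      have hmin : a ∉ cl (↑(u.erase b) ∪ ↑t') := by
        intro hc
        have hlt : u.card - 1 < k₀ := by
          have := Finset.card_pos.mpr ⟨b, hbu⟩
          omega
        exact Nat.find_min hP hlt ⟨u.erase b, (Finset.erase_subset _ _).trans hus,
          by rw [Finset.card_erase_of_mem hbu], hc⟩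
      -- a ∈ cl (insert b ((u.erase b) ∪ t'))
      have hins : (↑u ∪ ↑t' : Set ℂ) = insert b (↑(u.erase b) ∪ ↑t') := by
        ext x
        simp only [Set.mem_union, Finset.mem_coe, Set.mem_insert_iff, Finset.mem_erase]
        constructor
        · rintro (hx | hx)
          · by_cases hxb : x = b
            · exact Or.inl hxb
            · exact Or.inr (Or.inl ⟨hxb, hx⟩)
          · exact Or.inr (Or.inr hx)
        · rintro (rfl | ⟨_, hx⟩ | hx)
          · exact Or.inl hbu
          · exact Or.inl hx
          · exact Or.inr hx
      have hbex : b ∈ cl (insert a (↑(u.erase b) ∪ ↑t')) := by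
        apply cl_exchange _ hmin
        rwa [← hins]
      -- recurse
      set s₂ := s.erase b with hs₂
      set t₂ := insert a t' with ht₂
      have hsub2 : insert a (↑(u.erase b) ∪ ↑t' : Set ℂ) ⊆ ↑s₂ ∪ ↑t₂ := by
        rintro x (rfl | hx | hx)
        · exact Or.inr (Finset.mem_coe.mpr (Finset.mem_insert_self _ _))
        · exact Or.inl (Finset.mem_coe.mpr
            (Finset.erase_subset_erase _ hus (Finset.mem_coe.mp hx)))
        · exact Or.inr (Finset.mem_coe.mpr (Finset.mem_insert_of_mem (Finset.mem_coe.mp hx)))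
      have hb2 : b ∈ cl (↑s₂ ∪ ↑t₂) := cl_mono hsub2 hbex
      have hcov2 : (↑t : Set ℂ) ⊆ cl (↑s₂ ∪ ↑t₂) := by
        intro x hx
        refine cl_le_cl ?_ (hcov hx)
        rintro y (hy | hy)
        · by_cases hyb : y = b
          · subst hyb; exact hb2
          · exact subset_cl (Or.inl (Finset.mem_coe.mpr
              (Finset.mem_erase.mpr ⟨hyb, Finset.mem_coe.mp hy⟩)))
        · exact subset_cl (Or.inr (Finset.mem_coe.mpr
            (Finset.mem_insert_of_mem (Finset.mem_coe.mp hy))))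
      have hs₂card : s₂.card ≤ N := by
        rw [hs₂, Finset.card_erase_of_mem hbs]
        omega
      have ht₂t : t₂ ⊆ t := by
        intro x hx
        rcases Finset.mem_insert.mp hx with rfl | hx
        · exact hat
        · exact ht't hx
      have := ih s₂ t₂ t hs₂card ht ht₂t hcov2
      have hcards : s₂.card = s.card - 1 := by rw [hs₂, Finset.card_erase_of_mem hbs]
      have hcardt : t₂.card = t'.card + 1 := Finset.card_insert_of_notMem hant'
      have hspos : 1 ≤ s.card := Finset.card_pos.mpr ⟨b, hbs⟩
      omega

/-- The transcendence-degree upper bound: an algebraically independent family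
inside `cl ↑s` has at most `s.card` elements. -/
lemma count_main {m : ℕ} (f : Fin m → ℂ) (hf : AlgebraicIndependent ℚ f)
    (s : Finset ℂ) (hcov : ∀ k, f k ∈ cl ↑s) : m ≤ s.card := by
  classical
  set t := Finset.image f Finset.univ with htdef
  have hinj := hf.injective
  have hcard : t.card = m := by
    rw [htdef, Finset.card_image_of_injective _ hinj, Finset.card_univ, Fintype.card_fin]
  have hcoe : (↑t : Set ℂ) = Set.range f := by
    rw [htdef, Finset.coe_image, Finset.coe_univ, Set.image_univ]
  have ht : AlgebraicIndependent ℚ ((↑) : ((t : Set ℂ)) → ℂ) :=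
    hf.to_subtype_range' hcoe.symm
  have hcov' : (↑t : Set ℂ) ⊆ cl (↑(s : Finset ℂ) ∪ ↑(∅ : Finset ℂ)) := by
    rw [hcoe]
    rintro x ⟨k, rfl⟩
    simpa using hcov k
  have := count_aux s.card s ∅ t (le_refl _) ht (Finset.empty_subset _) hcov'
  simpa [hcard] using this

end Counting

/-- A subfield `F` of `ℂ` is closed under `exp` and `log` (principal branch:
`Complex.log` has imaginary part in `(-π, π]`). -/
def ELClosed (F : Subfield ℂ) : Prop :=
  (∀ x ∈ F, Complex.exp x ∈ F) ∧ (∀ x ∈ F, x ≠ 0 → Complex.log x ∈ F)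

/-- The field `𝔼` of EL numbers: the intersection of all subfields of `ℂ`
closed under `exp` and `log`. -/
noncomputable def EL : Subfield ℂ := sInf {F | ELClosed F}

/-- `towerField α i` is the subfield `A_i = ℚ(α₁, e^{α₁}, …, α_i, e^{α_i})` of `ℂ`
generated by the first `i` entries of `α` together with their exponentials
(every subfield of `ℂ` contains `ℚ`). In particular `towerField α 0 = ℚ`. -/
noncomputable def towerField {n : ℕ} (α : Fin n → ℂ) (i : ℕ) : Subfield ℂ :=
  Subfield.closure {x | ∃ j : Fin n, (j : ℕ) < i ∧ (x = α j ∨ x = Complex.exp (α j))}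

/-- A tower: a finite sequence of nonzero complex numbers such that for each `i`
there is an integer `m_i > 0` with `α_i ^ m_i ∈ A_{i-1}` or `e^{α_i m_i} ∈ A_{i-1}`. -/
def IsTower {n : ℕ} (α : Fin n → ℂ) : Prop :=
  (∀ i, α i ≠ 0) ∧
  ∀ i : Fin n, ∃ m : ℕ, 0 < m ∧
    ((α i) ^ m ∈ towerField α (i : ℕ) ∨
      Complex.exp (α i * (m : ℂ)) ∈ towerField α (i : ℕ))

/-- Schanuel's conjecture: if `α₁, …, α_n` are `ℚ`-linearly independent complex numbers,
then the field `ℚ(α₁, e^{α₁}, …, α_n, e^{α_n})` has transcendence degree at least `n`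
over `ℚ`, i.e. it contains `n` algebraically independent elements. -/
def SchanuelConjecture : Prop :=
  ∀ (n : ℕ) (α : Fin n → ℂ), LinearIndependent ℚ α →
    ∃ f : Fin n → ℂ,
      (∀ i, f i ∈ Subfield.closure
        (Set.range α ∪ Set.range fun i => Complex.exp (α i))) ∧
      AlgebraicIndependent ℚ f

section Tower

/-- The generating set of `towerField α i`. -/
def towerGens {n : ℕ} (α : Fin n → ℂ) (i : ℕ) : Set ℂ :=
  {x | ∃ j : Fin n, (j : ℕ) < i ∧ (x = α j ∨ x = Complex.exp (α j))}

lemma towerField_eq {n : ℕ} (α : Fin n → ℂ) (i : ℕ) :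
    towerField α i = Subfield.closure (towerGens α i) := rfl

/-- Each tower field is contained in the algebraic closure of a finite set of
cardinality at most `j`. -/
lemma tower_bound {n : ℕ} (β : Fin n → ℂ) (hβ : IsTower β) :
    ∀ j : ℕ, ∃ s : Finset ℂ, s.card ≤ j ∧ towerGens β j ⊆ cl ↑s := by
  intro j
  induction j with
  | zero =>
    exact ⟨∅, le_refl _, by rintro x ⟨k, hk, _⟩; omega⟩
  | succ j ih =>
    obtain ⟨s, hcard, hcov⟩ := ih
    by_cases hj : j < n
    · set k : Fin n := ⟨j, hj⟩ with hk
      have hfield : (towerField β j : Set ℂ) ⊆ cl ↑s := fun x hx =>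
        cl_le_cl hcov (subfield_mem_cl hx)
      obtain ⟨m, hm, hcase⟩ := hβ.2 k
      have hGsub : ∀ x ∈ towerGens β j, x ∈ towerGens β (j+1) := by
        rintro x ⟨k', hk', hx⟩
        exact ⟨k', by omega, hx⟩
      rcases hcase with h | h
      · -- β k is algebraic over cl ↑s
        have hb : β k ∈ cl ↑s := by
          have h1 : β k ^ m ∈ cl ↑s := hfield h
          exact IsAlgebraic.of_pow hm h1
        refine ⟨insert (Complex.exp (β k)) s, ?_, ?_⟩
        · calc (insert (Complex.exp (β k)) s).card ≤ s.card + 1 := Finset.card_insert_le _ _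
            _ ≤ j + 1 := by omega
        · rintro x ⟨k', hk', hx⟩
          have hmono : cl ↑s ⊆ cl ↑(insert (Complex.exp (β k)) s) :=
            cl_mono (Finset.coe_subset.mpr (Finset.subset_insert _ _))
          by_cases hk'j : (k' : ℕ) < j
          · exact hmono (hcov ⟨k', hk'j, hx⟩)
          · have hkk : k' = k := by
              apply Fin.ext
              simp only [hk]
              omega
            subst hkk
            rcases hx with rfl | rfl
            · exact hmono hb
            · exact subset_cl (Finset.mem_coe.mpr (Finset.mem_insert_self _ _))
      · -- exp (β k) is algebraic over cl ↑s
        have hb : Complex.exp (β k) ∈ cl ↑s := by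
          have h1 : Complex.exp (β k) ^ m ∈ cl ↑s := by
            have : Complex.exp (β k * (m : ℂ)) = Complex.exp (β k) ^ m := by
              rw [mul_comm, Complex.exp_nat_mul]
            exact this ▸ hfield h
          exact IsAlgebraic.of_pow hm h1
        refine ⟨insert (β k) s, ?_, ?_⟩
        · calc (insert (β k) s).card ≤ s.card + 1 := Finset.card_insert_le _ _
            _ ≤ j + 1 := by omega
        · rintro x ⟨k', hk', hx⟩
          have hmono : cl ↑s ⊆ cl ↑(insert (β k) s) :=
            cl_mono (Finset.coe_subset.mpr (Finset.subset_insert _ _))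
          by_cases hk'j : (k' : ℕ) < j
          · exact hmono (hcov ⟨k', hk'j, hx⟩)
          · have hkk : k' = k := by
              apply Fin.ext
              simp only [hk]
              omega
            subst hkk
            rcases hx with rfl | rfl
            · exact subset_cl (Finset.mem_coe.mpr (Finset.mem_insert_self _ _))
            · exact hmono hb
    · refine ⟨s, by omega, ?_⟩
      rintro x ⟨k', hk', hx⟩
      exact hcov ⟨k', by have := k'.isLt; omega, hx⟩

end Tower

/-- Assuming Schanuel's conjecture, in a reduced tower exactly one of `β_i`, `e^{β_i}`
is algebraic over `B_{i-1}`, and the transcendence degree of `B_i` over `ℚ` is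
exactly `i` (here the `(i+1)`-st entry is `β i`, `B_{i-1} = towerField β i` and
`B_i = towerField β (i+1)`). -/
theorem reduced_tower_trdeg (hS : SchanuelConjecture) {n : ℕ} (β : Fin n → ℂ)
    (hβ : IsTower β) (hred : LinearIndependent ℚ β) :
    ∀ i : Fin n,
      Xor' (IsAlgebraic (towerField β (i : ℕ)) (β i))
           (IsAlgebraic (towerField β (i : ℕ)) (Complex.exp (β i))) ∧
      (∃ f : Fin ((i : ℕ) + 1) → ℂ, (∀ k, f k ∈ towerField β ((i : ℕ) + 1)) ∧
        AlgebraicIndependent ℚ f) ∧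
      (∀ (m : ℕ) (f : Fin m → ℂ), (∀ k, f k ∈ towerField β ((i : ℕ) + 1)) →
        AlgebraicIndependent ℚ f → m ≤ (i : ℕ) + 1) := by
  intro i
  have hle : (i : ℕ) + 1 ≤ n := i.isLt
  have hlow : ∃ f : Fin ((i : ℕ) + 1) → ℂ,
      (∀ k, f k ∈ towerField β ((i : ℕ) + 1)) ∧ AlgebraicIndependent ℚ f := by
    obtain ⟨f, hmem, hind⟩ := hS ((i : ℕ) + 1) (fun k => β (Fin.castLE hle k))
      (hred.comp (Fin.castLE hle) (Fin.castLE_injective hle))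
    refine ⟨f, fun k => ?_, hind⟩
    have hsub : Subfield.closure (Set.range (fun k => β (Fin.castLE hle k)) ∪
        Set.range fun k => Complex.exp (β (Fin.castLE hle k))) ≤
        towerField β ((i : ℕ) + 1) := by
      apply Subfield.closure_le.mpr
      rintro x (⟨k, rfl⟩ | ⟨k, rfl⟩)
      · exact Subfield.subset_closure
          ⟨Fin.castLE hle k, by simpa using k.isLt, Or.inl rfl⟩
      · exact Subfield.subset_closure
          ⟨Fin.castLE hle k, by simpa using k.isLt, Or.inr rfl⟩
    exact hsub (hmem k)
  have hup : ∀ (m : ℕ) (f : Fin m → ℂ), (∀ k, f k ∈ towerField β ((i : ℕ) + 1)) →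
      AlgebraicIndependent ℚ f → m ≤ (i : ℕ) + 1 := by
    intro m f hmem hind
    obtain ⟨s, hcard, hcov⟩ := tower_bound β hβ ((i : ℕ) + 1)
    have hcov' : ∀ k, f k ∈ cl ↑s := fun k => cl_le_cl hcov (subfield_mem_cl (hmem k))
    exact le_trans (count_main f hind s hcov') hcard
  refine ⟨?_, hlow, hup⟩
  obtain ⟨m, hm, hcase⟩ := hβ.2 i
  have hone : IsAlgebraic (towerField β (i : ℕ)) (β i) ∨
      IsAlgebraic (towerField β (i : ℕ)) (Complex.exp (β i)) := by
    rcases hcase with h | h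
    · exact Or.inl (IsAlgebraic.of_pow hm (isAlg_of_mem h))
    · refine Or.inr (IsAlgebraic.of_pow hm ?_)
      have hexp : Complex.exp (β i * (m : ℂ)) = Complex.exp (β i) ^ m := by
        rw [mul_comm, Complex.exp_nat_mul]
      exact isAlg_of_mem (hexp ▸ h)
  have hnand : ¬(IsAlgebraic (towerField β (i : ℕ)) (β i) ∧
      IsAlgebraic (towerField β (i : ℕ)) (Complex.exp (β i))) := by
    rintro ⟨h1, h2⟩
    obtain ⟨s, hcard, hcov⟩ := tower_bound β hβ (i : ℕ)
    have hG : towerGens β ((i : ℕ) + 1) ⊆ cl ↑s := by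
      rintro x ⟨k', hk', hx⟩
      by_cases hlt : (k' : ℕ) < (i : ℕ)
      · exact hcov ⟨k', hlt, hx⟩
      · have hki : k' = i := Fin.ext (by omega)
        subst hki
        rcases hx with rfl | rfl
        · exact cl_le_cl hcov h1
        · exact cl_le_cl hcov h2
    obtain ⟨f, hmem, hind⟩ := hlow
    have hcount : (i : ℕ) + 1 ≤ s.card :=
      count_main f hind s (fun k => cl_le_cl hG (subfield_mem_cl (hmem k)))
    omega
  rcases hone with h | h
  · exact Or.inl ⟨h, fun h2 => hnand ⟨h, h2⟩⟩
  · exact Or.inr ⟨h, fun h2 => hnand ⟨h2, h⟩⟩
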